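/- Positivity of the Hardy-controlled part of the cone entropy functional: let n ≥ 2 be an integer, let K be a real number with −(n−1)² < K < 0, let τ₀ > 0, and let τ ≥ τ₀/(1 − (−K)/(n−1)²). Then for every continuously differentiable w : (0,∞) → ℝ with 0 < ∫₀^∞ r^(n−2) w(r)² dr < ∞ and ∫₀^∞ r^n w'(r)² dr < ∞, one has ∫₀^∞ (4(τ−τ₀) r^n w'(r)² + τ K r^(n−2) w(r)²) dr > 0. -/

import Mathlib

open MeasureTheory Set Filter Topology

theorem hardy_strict_aux (n : ℕ) (hn : 2 ≤ n) (w : ℝ → ℝ) (hw : ContDiffOn ℝ 1 w (Ioi 0))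
    (hint : IntegrableOn (fun r : ℝ => r ^ (n - 2) * (w r) ^ 2) (Ioi 0))
    (hpos : 0 < ∫ r in Ioi (0 : ℝ), r ^ (n - 2) * (w r) ^ 2)
    (hint' : IntegrableOn (fun r : ℝ => r ^ n * (deriv w r) ^ 2) (Ioi 0)) :
    ((n : ℝ) - 1) ^ 2 / 4 * (∫ r in Ioi (0 : ℝ), r ^ (n - 2) * (w r) ^ 2)
      < ∫ r in Ioi (0 : ℝ), r ^ n * (deriv w r) ^ 2 := by
  have hn1 : 1 ≤ n := by omega
  set c : ℝ := ((n : ℝ) - 1) / 2 with hc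
  set f1 : ℝ → ℝ := fun r => r ^ (n - 2) * (w r) ^ 2 with hf1
  set f2 : ℝ → ℝ := fun r => r ^ n * (deriv w r) ^ 2 with hf2
  set f3 : ℝ → ℝ := fun r => r ^ (n - 1) * (w r * deriv w r) with hf3
  have hwc : ContinuousOn w (Ioi 0) := hw.continuousOn
  have hw'c : ContinuousOn (deriv w) (Ioi 0) :=
    hw.continuousOn_deriv_of_isOpen isOpen_Ioi le_rfl
  -- basic sqrt facts
  have hsq1 : ∀ x : ℝ, 0 < x → Real.sqrt (x ^ n) ^ 2 = x ^ n := fun x hx =>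
    Real.sq_sqrt (pow_nonneg hx.le _)
  have hsq2 : ∀ x : ℝ, 0 < x → Real.sqrt (x ^ (n - 2)) ^ 2 = x ^ (n - 2) := fun x hx =>
    Real.sq_sqrt (pow_nonneg hx.le _)
  have hsq3 : ∀ x : ℝ, 0 < x → Real.sqrt (x ^ (n - 2)) * Real.sqrt (x ^ n) = x ^ (n - 1) := by
    intro x hx
    rw [← Real.sqrt_mul (pow_nonneg hx.le _), ← pow_add,
      show n - 2 + n = (n - 1) * 2 from by omega, pow_mul,
      Real.sqrt_sq (pow_nonneg hx.le _)]
  -- integrability of f3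
  have hf3c : ContinuousOn f3 (Ioi 0) :=
    (continuous_pow (n - 1)).continuousOn.mul (hwc.mul hw'c)
  have hf3m : AEStronglyMeasurable f3 (volume.restrict (Ioi 0)) :=
    hf3c.aestronglyMeasurable measurableSet_Ioi
  have hf3int : IntegrableOn f3 (Ioi 0) := by
    refine Integrable.mono (hint.add hint') hf3m ?_
    filter_upwards [ae_restrict_mem measurableSet_Ioi] with x hx
    have hx0 : (0 : ℝ) ≤ x := (le_of_lt hx)
    set a := Real.sqrt (x ^ (n - 2)) * |w x|
    set b := Real.sqrt (x ^ n) * |deriv w x|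
    have ha2 : a ^ 2 = f1 x := by
      rw [mul_pow, hsq2 x hx, sq_abs]
    have hb2 : b ^ 2 = f2 x := by
      rw [mul_pow, hsq1 x hx, sq_abs]
    have hab : a * b = |f3 x| := by
      rw [hf3]
      rw [abs_mul, abs_mul, abs_pow, abs_of_nonneg hx0]
      have : a * b = (Real.sqrt (x ^ (n - 2)) * Real.sqrt (x ^ n)) * (|w x| * |deriv w x|) := by
        ring
      rw [this, hsq3 x hx]
    have h2 := two_mul_le_add_sq a b
    have hfd : (0:ℝ) ≤ f1 x + f2 x := by
      have := mul_nonneg (pow_nonneg hx0 (n-2)) (sq_nonneg (w x))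
      have := mul_nonneg (pow_nonneg hx0 n) (sq_nonneg (deriv w x))
      simp only [hf1, hf2]; positivity
    have habnn : 0 ≤ a * b := mul_nonneg (mul_nonneg (Real.sqrt_nonneg _) (abs_nonneg _))
      (mul_nonneg (Real.sqrt_nonneg _) (abs_nonneg _))
    simp only [Pi.add_apply, Real.norm_eq_abs]
    rw [abs_of_nonneg hfd]
    nlinarith [h2, ha2, hb2, hab, habnn]
  -- the quadratic function g
  set g : ℝ → ℝ := fun x => Real.sqrt (x ^ n) * deriv w x + c * (Real.sqrt (x ^ (n - 2)) * w x)
    with hgdef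
  have hgsq : ∀ x ∈ Ioi (0:ℝ), g x ^ 2 = f2 x + 2 * c * f3 x + c ^ 2 * f1 x := by
    intro x hx
    have e1 := hsq1 x hx
    have e2 := hsq2 x hx
    have e3 := hsq3 x hx
    have : g x ^ 2 = Real.sqrt (x ^ n) ^ 2 * (deriv w x) ^ 2
        + 2 * c * ((Real.sqrt (x ^ (n - 2)) * Real.sqrt (x ^ n)) * (w x * deriv w x))
        + c ^ 2 * (Real.sqrt (x ^ (n - 2)) ^ 2 * (w x) ^ 2) := by
      simp only [hgdef]; ring
    rw [this, e1, e2, e3]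
  have hg2int : IntegrableOn (fun x => g x ^ 2) (Ioi 0) := by
    have h0 : IntegrableOn (fun x => f2 x + 2 * c * f3 x + c ^ 2 * f1 x) (Ioi 0) :=
      (hint'.add ((hf3int.const_mul (2 * c)))).add (hint.const_mul (c ^ 2))
    refine h0.congr ?_
    filter_upwards [ae_restrict_mem measurableSet_Ioi] with x hx
    exact (hgsq x hx).symm
  have hg2val : ∫ x in Ioi (0:ℝ), g x ^ 2
      = (∫ x in Ioi (0:ℝ), f2 x) + 2 * c * (∫ x in Ioi (0:ℝ), f3 x)
        + c ^ 2 * (∫ x in Ioi (0:ℝ), f1 x) := by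
    have i3 : IntegrableOn (fun x => 2 * c * f3 x) (Ioi 0) := hf3int.const_mul _
    have i1 : IntegrableOn (fun x => c ^ 2 * f1 x) (Ioi 0) := hint.const_mul _
    have i23 : IntegrableOn (fun x => f2 x + 2 * c * f3 x) (Ioi 0) := hint'.add i3
    rw [setIntegral_congr_fun measurableSet_Ioi hgsq, integral_add i23 i1,
      integral_add hint' i3, integral_const_mul, integral_const_mul]
  -- the boundary function F
  set F : ℝ → ℝ := fun x => x ^ (n - 1) * (w x) ^ 2 with hFdef
  set G : ℝ → ℝ := fun x => ((n:ℝ) - 1) * f1 x + 2 * f3 x with hGdef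
  have hF' : ∀ x ∈ Ioi (0:ℝ), HasDerivAt F (G x) x := by
    intro x hx
    have hdw : HasDerivAt w (deriv w x) x :=
      ((hw.contDiffAt (isOpen_Ioi.mem_nhds hx)).differentiableAt one_ne_zero).hasDerivAt
    have H := (hasDerivAt_pow (n - 1) x).mul (hdw.pow 2)
    have hval : (↑(n - 1) * x ^ (n - 1 - 1)) * (w x) ^ 2
        + x ^ (n - 1) * (↑2 * w x ^ (2 - 1) * deriv w x) = G x := by
      rw [show n - 1 - 1 = n - 2 from by omega, Nat.cast_sub hn1]
      simp only [hGdef, hf1, hf3]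
      push_cast
      ring
    rw [← hval]
    exact H
  have hGc : ContinuousOn G (Ioi 0) := by
    apply ContinuousOn.add
    · exact continuousOn_const.mul ((continuous_pow (n-2)).continuousOn.mul (hwc.pow 2))
    · exact continuousOn_const.mul hf3c
  -- smallness of F near 0 and ∞
  have hsmall : ∀ ε > (0:ℝ), ∀ δ > (0:ℝ), ∃ x, 0 < x ∧ x < δ ∧ F x < ε := by
    intro ε hε δ hδ
    by_contra h
    push_neg at h
    have hge : ∀ x ∈ Ioo (0:ℝ) δ, ε * x⁻¹ ≤ f1 x := by
      intro x hx
      have hFx := h x hx.1 hx.2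
      have hFx' : F x = x * f1 x := by
        simp only [hFdef, hf1]
        rw [show n - 1 = (n-2) + 1 from by omega, pow_succ]
        ring
      rw [hFx'] at hFx
      rw [mul_inv_le_iff₀ hx.1]  -- ε ≤ f1 x * x
      linarith [hFx]
    have hii : IntegrableOn (fun x : ℝ => ε * x⁻¹) (Ioo 0 δ) := by
      refine Integrable.mono (hint.mono_set Ioo_subset_Ioi_self) ?_ ?_
      · exact (measurable_const.mul measurable_inv).aestronglyMeasurable
      · filter_upwards [ae_restrict_mem measurableSet_Ioo] with x hx
        rw [Real.norm_eq_abs, Real.norm_eq_abs]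
        have h1 : 0 ≤ ε * x⁻¹ := mul_nonneg hε.le (inv_nonneg.2 hx.1.le)
        rw [abs_of_nonneg h1, abs_of_nonneg]
        · exact hge x hx
        · exact le_trans h1 (hge x hx)
    have : IntegrableOn (fun x : ℝ => x ^ (-1 : ℝ)) (Ioo 0 δ) := by
      have := hii.const_mul ε⁻¹
      refine Integrable.congr this ?_
      filter_upwards [ae_restrict_mem measurableSet_Ioo] with x hx
      rw [Real.rpow_neg_one]
      field_simp
    have := (intervalIntegral.integrableOn_Ioo_rpow_iff hδ).1 this
    linarith
  have hlarge : ∀ ε > (0:ℝ), ∀ R : ℝ, ∃ x, R < x ∧ F x < ε := by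
    intro ε hε R
    by_contra h
    push_neg at h
    set t := max R 1 with ht
    have ht0 : (0:ℝ) < t := lt_of_lt_of_le zero_lt_one (le_max_right _ _)
    have hge : ∀ x ∈ Ioi t, ε * x⁻¹ ≤ f1 x := by
      intro x hx
      have hxR : R < x := lt_of_le_of_lt (le_max_left _ _) hx
      have hx0 : (0:ℝ) < x := lt_trans ht0 hx
      have hFx := h x hxR
      have hFx' : F x = x * f1 x := by
        simp only [hFdef, hf1]
        rw [show n - 1 = (n-2) + 1 from by omega, pow_succ]
        ring
      rw [hFx'] at hFx
      rw [mul_inv_le_iff₀ hx0]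
      linarith [hFx]
    have hii : IntegrableOn (fun x : ℝ => ε * x⁻¹) (Ioi t) := by
      refine Integrable.mono (hint.mono_set (Ioi_subset_Ioi ht0.le)) ?_ ?_
      · exact (measurable_const.mul measurable_inv).aestronglyMeasurable
      · filter_upwards [ae_restrict_mem measurableSet_Ioi] with x hx
        have hx0 : (0:ℝ) < x := lt_trans ht0 hx
        rw [Real.norm_eq_abs, Real.norm_eq_abs]
        have h1 : 0 ≤ ε * x⁻¹ := mul_nonneg hε.le (inv_nonneg.2 hx0.le)
        rw [abs_of_nonneg h1, abs_of_nonneg]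
        · exact hge x hx
        · exact le_trans h1 (hge x hx)
    have : IntegrableOn (fun x : ℝ => x ^ (-1 : ℝ)) (Ioi t) := by
      have := hii.const_mul ε⁻¹
      refine Integrable.congr this ?_
      filter_upwards [ae_restrict_mem measurableSet_Ioi] with x hx
      rw [Real.rpow_neg_one]
      field_simp
    have := (integrableOn_Ioi_rpow_iff ht0).1 this
    linarith
  -- choose sequences
  have hA : ∀ k : ℕ, ∃ x : ℝ, 0 < x ∧ x < 1 / ((k:ℝ) + 1) ∧ F x < 1 / ((k:ℝ) + 1) := by
    intro k
    obtain ⟨x, h1, h2, h3⟩ := hsmall (1 / ((k:ℝ) + 1)) (by positivity) (1 / ((k:ℝ) + 1))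
      (by positivity)
    exact ⟨x, h1, h2, h3⟩
  choose a ha1 ha2 ha3 using hA
  have hB : ∀ k : ℕ, ∃ x : ℝ, (k:ℝ) + 1 < x ∧ F x < 1 / ((k:ℝ) + 1) := by
    intro k
    obtain ⟨x, h1, h2⟩ := hlarge (1 / ((k:ℝ) + 1)) (by positivity) ((k:ℝ) + 1)
    exact ⟨x, h1, h2⟩
  choose b hb1 hb3 using hB
  have hbpos : ∀ k, (0:ℝ) < b k := fun k => lt_of_le_of_lt (by positivity) (hb1 k)
  have hab : ∀ k, a k < b k := by
    intro k
    have h1 : 1 / ((k:ℝ) + 1) ≤ 1 := by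
      rw [div_le_one (by positivity)]
      simp
    have : (1:ℝ) ≤ (k:ℝ) + 1 := by simp
    linarith [ha2 k, hb1 k]
  have haT : Tendsto a atTop (𝓝 0) :=
    squeeze_zero (fun k => (ha1 k).le) (fun k => (ha2 k).le)
      tendsto_one_div_add_atTop_nhds_zero_nat
  have hbT : Tendsto b atTop atTop :=
    tendsto_atTop_mono (fun k => (hb1 k).le)
      (tendsto_atTop_add_const_right _ 1 tendsto_natCast_atTop_atTop)
  have hFnn : ∀ x : ℝ, 0 < x → 0 ≤ F x := by
    intro x hx
    exact mul_nonneg (pow_nonneg hx.le _) (sq_nonneg _)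
  have hFaT : Tendsto (fun k => F (a k)) atTop (𝓝 0) :=
    squeeze_zero (fun k => hFnn _ (ha1 k)) (fun k => (ha3 k).le)
      tendsto_one_div_add_atTop_nhds_zero_nat
  have hFbT : Tendsto (fun k => F (b k)) atTop (𝓝 0) :=
    squeeze_zero (fun k => hFnn _ (hbpos k)) (fun k => (hb3 k).le)
      tendsto_one_div_add_atTop_nhds_zero_nat
  -- integration by parts on [a k, b k]
  have hsubIoo : ∀ k, Ioo (a k) (b k) ⊆ Ioi (0:ℝ) :=
    fun k x hx => lt_trans (ha1 k) hx.1
  have hIBP : ∀ k, ((n:ℝ) - 1) * (∫ x in Ioo (a k) (b k), f1 x)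
      + 2 * (∫ x in Ioo (a k) (b k), f3 x) = F (b k) - F (a k) := by
    intro k
    have hsub : Set.uIcc (a k) (b k) ⊆ Ioi (0:ℝ) := by
      rw [uIcc_of_le (hab k).le]
      exact fun x hx => lt_of_lt_of_le (ha1 k) hx.1
    have hibp : ∫ x in (a k)..(b k), G x = F (b k) - F (a k) :=
      intervalIntegral.integral_eq_sub_of_hasDerivAt (fun x hx => hF' x (hsub hx))
        ((hGc.mono hsub).intervalIntegrable)
    have i1 : IntegrableOn (fun x => ((n:ℝ) - 1) * f1 x) (Ioo (a k) (b k)) :=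
      (hint.mono_set (hsubIoo k)).const_mul _
    have i3 : IntegrableOn (fun x => 2 * f3 x) (Ioo (a k) (b k)) :=
      (hf3int.mono_set (hsubIoo k)).const_mul _
    rw [intervalIntegral.integral_of_le (hab k).le, integral_Ioc_eq_integral_Ioo] at hibp
    rw [← hibp, integral_add i1 i3, integral_const_mul, integral_const_mul]
  -- convergence of truncated integrals
  have key : ∀ f : ℝ → ℝ, IntegrableOn f (Ioi 0) →
      Tendsto (fun k => ∫ x in Ioo (a k) (b k), f x) atTop (𝓝 (∫ x in Ioi (0:ℝ), f x)) := by
    intro f hf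
    have hdc := MeasureTheory.tendsto_integral_of_dominated_convergence
      (μ := volume.restrict (Ioi 0)) (F := fun k => (Ioo (a k) (b k)).indicator f)
      (f := f) (bound := fun x => |f x|)
      (fun k => hf.1.indicator measurableSet_Ioo) hf.abs
      (fun k => Eventually.of_forall fun x =>
        norm_indicator_le_norm_self f x)
      ?_
    · have hrw : ∀ k, ∫ x, (Ioo (a k) (b k)).indicator f x ∂(volume.restrict (Ioi 0))
          = ∫ x in Ioo (a k) (b k), f x := by
        intro k
        rw [integral_indicator measurableSet_Ioo,
          Measure.restrict_restrict measurableSet_Ioo,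
          inter_eq_self_of_subset_left (hsubIoo k)]
      exact (funext hrw : _) ▸ hdc
    · filter_upwards [ae_restrict_mem measurableSet_Ioi] with x hx
      have h1 : ∀ᶠ k in atTop, a k < x := haT.eventually_lt_const hx
      have h2 : ∀ᶠ k in atTop, x < b k := hbT.eventually_gt_atTop x
      refine Tendsto.congr' ?_ (tendsto_const_nhds (x := f x))
      filter_upwards [h1, h2] with k hk1 hk2
      exact (indicator_of_mem (Set.mem_Ioo.mpr ⟨hk1, hk2⟩) f).symm
  -- the integration-by-parts identity in the limit
  have hM : ((n:ℝ) - 1) * (∫ x in Ioi (0:ℝ), f1 x) + 2 * (∫ x in Ioi (0:ℝ), f3 x) = 0 := by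
    have t1 := (key f1 hint).const_mul ((n:ℝ) - 1)
    have t2 := (key f3 hf3int).const_mul (2:ℝ)
    have tL := t1.add t2
    have tR : Tendsto (fun k => F (b k) - F (a k)) atTop (𝓝 0) := by
      simpa using hFbT.sub hFaT
    have : (fun k => ((n:ℝ) - 1) * (∫ x in Ioo (a k) (b k), f1 x)
        + 2 * (∫ x in Ioo (a k) (b k), f3 x)) = fun k => F (b k) - F (a k) :=
      funext fun k => hIBP k
    rw [this] at tL
    exact tendsto_nhds_unique tL tR
  -- positivity of ∫ g²
  have hgc : ContinuousOn g (Ioi 0) := by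
    apply ContinuousOn.add
    · exact ((continuous_pow n).sqrt.continuousOn).mul hw'c
    · exact continuousOn_const.mul (((continuous_pow (n-2)).sqrt.continuousOn).mul hwc)
  have hg2pos : 0 < ∫ x in Ioi (0:ℝ), g x ^ 2 := by
    by_cases hzero : ∀ x ∈ Ioi (0:ℝ), g x = 0
    · -- then w ≡ 0, contradicting hpos
      exfalso
      have hGzero : ∀ x ∈ Ioi (0:ℝ), G x = 0 := by
        intro x hx
        have hx0 : (0:ℝ) < x := hx
        have hg0 : Real.sqrt (x ^ n) * deriv w x = -(c * (Real.sqrt (x ^ (n - 2)) * w x)) := by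
          have := hzero x hx
          simp only [hgdef] at this
          linarith
        -- multiply by sqrt(x^(n-2))
        have h1 : x ^ (n - 1) * deriv w x = -(c * (x ^ (n - 2) * w x)) := by
          have := congrArg (fun y => Real.sqrt (x ^ (n - 2)) * y) hg0
          calc x ^ (n - 1) * deriv w x
              = Real.sqrt (x ^ (n - 2)) * (Real.sqrt (x ^ n) * deriv w x) := by
                rw [← mul_assoc, hsq3 x hx0]
            _ = Real.sqrt (x ^ (n - 2)) * -(c * (Real.sqrt (x ^ (n - 2)) * w x)) := by rw [hg0]
            _ = -(c * (Real.sqrt (x ^ (n - 2)) ^ 2 * w x)) := by ring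
            _ = -(c * (x ^ (n - 2) * w x)) := by rw [hsq2 x hx0]
        simp only [hGdef, hf1, hf3]
        have : w x * (x ^ (n - 1) * deriv w x) = w x * -(c * (x ^ (n - 2) * w x)) := by rw [h1]
        rw [hc] at this
        nlinarith [this]
      have hFzero : ∀ x ∈ Ioi (0:ℝ), F x = 0 := by
        intro x hx
        have h1 : ∀ᶠ k in atTop, a k < x := haT.eventually_lt_const hx
        have h2 : ∀ᶠ k in atTop, F x = F (a k) := by
          filter_upwards [h1] with k hk
          have hsub : Set.uIcc (a k) x ⊆ Ioi (0:ℝ) := by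
            rw [uIcc_of_le hk.le]
            exact fun y hy => lt_of_lt_of_le (ha1 k) hy.1
          have hibp : ∫ t in (a k)..x, G t = F x - F (a k) :=
            intervalIntegral.integral_eq_sub_of_hasDerivAt (fun t ht => hF' t (hsub ht))
              ((hGc.mono hsub).intervalIntegrable)
          have hGz : ∫ t in (a k)..x, G t = 0 := by
            rw [intervalIntegral.integral_congr (g := fun _ => (0:ℝ))
              (fun t ht => hGzero t (hsub ht))]
            simp
          rw [hGz] at hibp
          linarith
        have h3 : Tendsto (fun _ : ℕ => F x) atTop (𝓝 0) :=
          Tendsto.congr' (h2.mono fun k hk => hk.symm) hFaT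
        exact (tendsto_nhds_unique tendsto_const_nhds h3)
      have hwzero : ∀ x ∈ Ioi (0:ℝ), w x = 0 := by
        intro x hx
        have := hFzero x hx
        simp only [hFdef] at this
        have hxne : x ^ (n - 1) ≠ 0 := pow_ne_zero _ (ne_of_gt hx)
        have : (w x) ^ 2 = 0 := by
          rcases mul_eq_zero.1 this with h | h
          · exact absurd h hxne
          · exact h
        exact pow_eq_zero_iff (n := 2) (by norm_num) |>.1 this
      have : ∫ x in Ioi (0:ℝ), f1 x = 0 := by
        rw [setIntegral_congr_fun measurableSet_Ioi
          (fun x hx => by simp [hf1, hwzero x hx] : EqOn f1 (fun _ => (0:ℝ)) (Ioi 0))]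
        simp
      rw [this] at hpos
      exact lt_irrefl _ hpos
    · push_neg at hzero
      obtain ⟨x₀, hx₀, hgx₀⟩ := hzero
      rw [setIntegral_pos_iff_support_of_nonneg_ae
        (Eventually.of_forall fun x => sq_nonneg (g x)) hg2int]
      have hca : ContinuousAt g x₀ :=
        (hgc x₀ hx₀).continuousAt (isOpen_Ioi.mem_nhds hx₀)
      have hev : ∀ᶠ y in 𝓝 x₀, g y ≠ 0 ∧ y ∈ Ioi (0:ℝ) :=
        (hca.eventually_ne hgx₀).and (isOpen_Ioi.eventually_mem hx₀)
      obtain ⟨ε, hε, hball⟩ := Metric.eventually_nhds_iff.1 hev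
      have hsub : Metric.ball x₀ ε ⊆ (Function.support fun x => g x ^ 2) ∩ Ioi 0 := by
        intro y hy
        obtain ⟨h1, h2⟩ := hball (Metric.mem_ball.1 hy)
        exact ⟨pow_ne_zero _ h1, h2⟩
      calc (0:ENNReal) < volume (Metric.ball x₀ ε) := Metric.measure_ball_pos _ _ hε
        _ ≤ volume ((Function.support fun x => g x ^ 2) ∩ Ioi 0) := measure_mono hsub
  -- conclude
  rw [hg2val] at hg2pos
  have hMv : ∫ x in Ioi (0:ℝ), f3 x = -c * (∫ x in Ioi (0:ℝ), f1 x) := by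
    linear_combination ((1:ℝ)/2) * hM
  rw [hMv] at hg2pos
  have hcsq : c ^ 2 = ((n:ℝ) - 1) ^ 2 / 4 := by rw [hc]; ring
  nlinarith [hg2pos, hcsq]
/-- **Positivity of the Hardy-controlled part of the cone entropy functional.**
For `n ≥ 2`, `−(n−1)² < K < 0`, `τ₀ > 0` and `τ ≥ τ₀/(1 − (−K)/(n−1)²)`,
every continuously differentiable `w : (0,∞) → ℝ` with
`0 < ∫₀^∞ r^(n−2) w² dr < ∞` and `∫₀^∞ r^n w'² dr < ∞` satisfies
`∫₀^∞ (4(τ−τ₀) r^n w'(r)² + τ K r^(n−2) w(r)²) dr > 0`. -/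
theorem hardy_controlled_positivity
    (n : ℕ) (hn : 2 ≤ n) (K τ₀ τ : ℝ)
    (hK₁ : -((n : ℝ) - 1) ^ 2 < K) (hK₂ : K < 0) (hτ₀ : 0 < τ₀)
    (hτ : τ ≥ τ₀ / (1 - (-K) / ((n : ℝ) - 1) ^ 2))
    (w : ℝ → ℝ) (hw : ContDiffOn ℝ 1 w (Ioi 0))
    (hint : IntegrableOn (fun r : ℝ => r ^ (n - 2) * (w r) ^ 2) (Ioi 0))
    (hpos : 0 < ∫ r in Ioi (0 : ℝ), r ^ (n - 2) * (w r) ^ 2)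
    (hint' : IntegrableOn (fun r : ℝ => r ^ n * (deriv w r) ^ 2) (Ioi 0)) :
    0 < ∫ r in Ioi (0 : ℝ),
        (4 * (τ - τ₀) * r ^ n * (deriv w r) ^ 2 + τ * K * r ^ (n - 2) * (w r) ^ 2) := by
  have hn1 : (1:ℝ) ≤ (n:ℝ) - 1 := by
    have : (2:ℝ) ≤ (n:ℝ) := by exact_mod_cast hn
    linarith
  have hsq : 0 < ((n:ℝ) - 1) ^ 2 := by nlinarith
  have hD : 0 < 1 - (-K) / ((n:ℝ) - 1) ^ 2 := by
    rw [sub_pos, div_lt_one hsq]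
    linarith
  have hτpos : 0 < τ := lt_of_lt_of_le (div_pos hτ₀ hD) hτ
  have hτD : τ₀ ≤ τ * (1 - (-K) / ((n:ℝ) - 1) ^ 2) := (div_le_iff₀ hD).mp hτ
  have h1 : τ * (-K) / (((n:ℝ) - 1) ^ 2) ≤ τ - τ₀ := by
    have he : τ * (1 - (-K) / (((n:ℝ) - 1) ^ 2))
        = τ - τ * (-K) / (((n:ℝ) - 1) ^ 2) := by ring
    rw [he] at hτD
    linarith
  have hgap2 : τ * (-K) ≤ (τ - τ₀) * ((n:ℝ) - 1) ^ 2 := (div_le_iff₀ hsq).mp h1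
  have hH := hardy_strict_aux n hn w hw hint hpos hint'
  set I : ℝ := ∫ r in Ioi (0:ℝ), r ^ (n - 2) * (w r) ^ 2 with hI
  set J : ℝ := ∫ r in Ioi (0:ℝ), r ^ n * (deriv w r) ^ 2 with hJ
  have hJpos : 0 < J := (mul_nonneg (by positivity) hpos.le).trans_lt hH
  have hsplit : (∫ r in Ioi (0:ℝ),
        (4 * (τ - τ₀) * r ^ n * (deriv w r) ^ 2 + τ * K * r ^ (n - 2) * (w r) ^ 2))
      = 4 * (τ - τ₀) * J + τ * K * I := by
    have i2 : IntegrableOn (fun r : ℝ => 4 * (τ - τ₀) * (r ^ n * (deriv w r) ^ 2)) (Ioi 0) :=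
      hint'.const_mul _
    have i1 : IntegrableOn (fun r : ℝ => τ * K * (r ^ (n - 2) * (w r) ^ 2)) (Ioi 0) :=
      hint.const_mul _
    have he : (fun r : ℝ => 4 * (τ - τ₀) * r ^ n * (deriv w r) ^ 2
          + τ * K * r ^ (n - 2) * (w r) ^ 2)
        = fun r : ℝ => 4 * (τ - τ₀) * (r ^ n * (deriv w r) ^ 2)
          + τ * K * (r ^ (n - 2) * (w r) ^ 2) := by
      funext r; ring
    rw [he, integral_add i2 i1, integral_const_mul, integral_const_mul]
  rw [hsplit]
  have hP : 0 < τ * (-K) := mul_pos hτpos (by linarith)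
  have hkey : 0 < ((n:ℝ) - 1) ^ 2 * (4 * (τ - τ₀) * J + τ * K * I) := by
    nlinarith [mul_nonneg (sub_nonneg.mpr hgap2) hJpos.le,
      mul_pos hP (by linarith [hH] : (0:ℝ) < 4 * J - ((n:ℝ) - 1) ^ 2 * I)]
  by_contra hcon
  push_neg at hcon
  nlinarith [hkey, mul_nonneg hsq.le (neg_nonneg.mpr hcon)]
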